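/- Let Ψ : ℝⁿ → ℝⁿ be a globally biLipschitz bijection and σ, ω locally finite positive Borel measures possibly sharing point masses. Let P(σ,ω) denote the set of common atoms of σ and ω. Define the punctured measure ω(Q, P) = ω(Q) - sup{ω({p}) : p ∈ Q ∩ P}. Then the punctured Muckenhoupt constant A₂^{α,punct}(σ,ω) := sup_Q (σ(Q,P)/|Q|^{1-α/n})(ω(Q)/|Q|^{1-α/n}) taken over all cubes satisfies A₂^{α,punct}(σ,ω) ≈ A₂^{α,punct}(Ψ*σ, Ψ*ω), with implied constants depending only on n, α and the biLipschitz constants of Ψ. -/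

import Mathlib

open MeasureTheory
open scoped ENNReal

/-- The axis-parallel half-open cube `[0,s)ⁿ`. -/
def unitCornerCube (n : ℕ) (s : ℝ) : Set (EuclideanSpace ℝ (Fin n)) :=
  {x | ∀ i, x i ∈ Set.Ico (0 : ℝ) s}

/-- A (rotated) cube in `ℝⁿ`: the image of `[0,s)ⁿ` under a linear isometry
followed by a translation. -/
def rotatedCube {n : ℕ} (f : EuclideanSpace ℝ (Fin n) ≃ₗᵢ[ℝ] EuclideanSpace ℝ (Fin n))
    (a : EuclideanSpace ℝ (Fin n)) (s : ℝ) : Set (EuclideanSpace ℝ (Fin n)) :=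
  (fun x => a + f x) '' unitCornerCube n s

/-- The set of common atoms of `σ` and `ω`. -/
def commonAtoms {n : ℕ} (σ ω : Measure (EuclideanSpace ℝ (Fin n))) :
    Set (EuclideanSpace ℝ (Fin n)) :=
  {p | σ {p} ≠ 0 ∧ ω {p} ≠ 0}

/-- The punctured mass `μ(Q, 𝔓) = μ(Q) - sup{μ({p}) : p ∈ Q ∩ 𝔓}`. -/
noncomputable def puncturedMass {n : ℕ} (μ : Measure (EuclideanSpace ℝ (Fin n)))
    (P Q : Set (EuclideanSpace ℝ (Fin n))) : ℝ≥0∞ :=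
  μ Q - ⨆ p ∈ Q ∩ P, μ {p}

/-- `A₂^{α,punct}(σ,ω) ≤ A`: for every (rotated) cube `Q` of side length `s`,
`σ(Q,𝔓)·ω(Q) ≤ A·|Q|^{2(1-α/n)}` with `|Q| = sⁿ`. -/
def A2punctLE {n : ℕ} (α : ℝ) (σ ω : Measure (EuclideanSpace ℝ (Fin n))) (A : ℝ≥0∞) : Prop :=
  ∀ (f : EuclideanSpace ℝ (Fin n) ≃ₗᵢ[ℝ] EuclideanSpace ℝ (Fin n))
    (a : EuclideanSpace ℝ (Fin n)) (s : ℝ), 0 < s →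
    puncturedMass σ (commonAtoms σ ω) (rotatedCube f a s) * ω (rotatedCube f a s) ≤
      A * ENNReal.ofReal (s ^ (2 * ((n : ℝ) - α)))

lemma measurableSet_unitCornerCube (n : ℕ) (s : ℝ) : MeasurableSet (unitCornerCube n s) := by
  have h : unitCornerCube n s
      = ⋂ i, (fun x : EuclideanSpace ℝ (Fin n) => x i) ⁻¹' Set.Ico (0:ℝ) s := by
    ext x; simp [unitCornerCube, Set.mem_iInter]
  rw [h]
  exact MeasurableSet.iInter fun i => (EuclideanSpace.proj i : EuclideanSpace ℝ (Fin n) →L[ℝ] ℝ).continuous.measurable measurableSet_Ico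

lemma rotatedCube_eq_preimage {n : ℕ}
    (f : EuclideanSpace ℝ (Fin n) ≃ₗᵢ[ℝ] EuclideanSpace ℝ (Fin n))
    (a : EuclideanSpace ℝ (Fin n)) (s : ℝ) :
    rotatedCube f a s = (fun x => f.symm (x - a)) ⁻¹' unitCornerCube n s := by
  ext x
  simp only [rotatedCube, Set.mem_image, Set.mem_preimage]
  constructor
  · rintro ⟨u, hu, rfl⟩; simpa using hu
  · intro h; exact ⟨f.symm (x - a), h, by simp⟩

lemma measurableSet_rotatedCube {n : ℕ}
    (f : EuclideanSpace ℝ (Fin n) ≃ₗᵢ[ℝ] EuclideanSpace ℝ (Fin n))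
    (a : EuclideanSpace ℝ (Fin n)) (s : ℝ) :
    MeasurableSet (rotatedCube f a s) := by
  rw [rotatedCube_eq_preimage]
  exact (f.symm.continuous.comp (continuous_id.sub continuous_const)).measurable
    (measurableSet_unitCornerCube n s)

lemma dist_le_of_mem_unitCornerCube {n : ℕ} {s : ℝ} (hs : 0 ≤ s)
    {u v : EuclideanSpace ℝ (Fin n)} (hu : u ∈ unitCornerCube n s)
    (hv : v ∈ unitCornerCube n s) : dist u v ≤ Real.sqrt n * s := by
  rw [EuclideanSpace.dist_eq]
  have hsum : (∑ i, dist (u i) (v i) ^ 2) ≤ (n : ℝ) * s ^ 2 := by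
    have : ∀ i ∈ Finset.univ, dist (u i) (v i) ^ 2 ≤ s ^ 2 := by
      intro i _
      have hui := hu i; have hvi := hv i
      have h1 : |u i - v i| ≤ s := by
        rw [abs_le]
        exact ⟨by linarith [hui.1, hui.2, hvi.1, hvi.2], by linarith [hui.1, hui.2, hvi.1, hvi.2]⟩
      have : dist (u i) (v i) = |u i - v i| := Real.dist_eq _ _
      rw [this]
      exact pow_le_pow_left₀ (abs_nonneg _) h1 2
    calc (∑ i, dist (u i) (v i) ^ 2) ≤ ∑ _i : Fin n, s ^ 2 := Finset.sum_le_sum this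
      _ = (n : ℝ) * s ^ 2 := by simp [mul_comm]
  calc Real.sqrt (∑ i, dist (u i) (v i) ^ 2) ≤ Real.sqrt ((n : ℝ) * s ^ 2) :=
        Real.sqrt_le_sqrt hsum
    _ = Real.sqrt n * s := by
        rw [Real.sqrt_mul (by positivity), Real.sqrt_sq hs]

lemma dist_le_of_mem_rotatedCube {n : ℕ}
    {f : EuclideanSpace ℝ (Fin n) ≃ₗᵢ[ℝ] EuclideanSpace ℝ (Fin n)}
    {a : EuclideanSpace ℝ (Fin n)} {s : ℝ} (hs : 0 ≤ s)
    {x y : EuclideanSpace ℝ (Fin n)} (hx : x ∈ rotatedCube f a s)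
    (hy : y ∈ rotatedCube f a s) : dist x y ≤ Real.sqrt n * s := by
  obtain ⟨u, hu, rfl⟩ := hx
  obtain ⟨v, hv, rfl⟩ := hy
  have : dist (a + f u) (a + f v) = dist u v := by
    rw [dist_add_left, f.dist_map]
  rw [this]
  exact dist_le_of_mem_unitCornerCube hs hu hv

lemma abs_coord_le_dist {n : ℕ} (x y : EuclideanSpace ℝ (Fin n)) (i : Fin n) :
    |x i - y i| ≤ dist x y := by
  rw [EuclideanSpace.dist_eq, ← Real.sqrt_sq_eq_abs]
  apply Real.sqrt_le_sqrt
  have := Finset.single_le_sum (f := fun j => dist (x j) (y j) ^ 2)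
    (fun j _ => sq_nonneg _) (Finset.mem_univ i)
  simpa [Real.dist_eq] using this

lemma puncturedMass_mono {n : ℕ} (σ : Measure (EuclideanSpace ℝ (Fin n)))
    (P E F : Set (EuclideanSpace ℝ (Fin n))) (hEF : E ⊆ F) (hF : σ F ≠ ⊤) :
    puncturedMass σ P E ≤ puncturedMass σ P F := by
  unfold puncturedMass
  rcases Set.eq_empty_or_nonempty (F ∩ P) with h | h
  · have hE : E ∩ P = ∅ := by
      apply Set.eq_empty_of_subset_empty
      rw [← h]; exact Set.inter_subset_inter_left _ hEF
    have h0 : (⨆ p ∈ E ∩ P, σ {p}) = 0 := by simp [hE]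
    have h1 : (⨆ p ∈ F ∩ P, σ {p}) = 0 := by simp [h]
    rw [h0, h1, tsub_zero, tsub_zero]; exact measure_mono hEF
  · have key : ∀ p ∈ F ∩ P, (σ E - ⨆ q ∈ E ∩ P, σ {q}) + σ {p} ≤ σ F := by
      intro p hp
      by_cases hpE : p ∈ E
      · have h1 : σ {p} ≤ ⨆ q ∈ E ∩ P, σ {q} := le_iSup₂ (f := fun q _ => σ {q}) p ⟨hpE, hp.2⟩
        calc (σ E - ⨆ q ∈ E ∩ P, σ {q}) + σ {p} ≤ (σ E - σ {p}) + σ {p} :=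
              add_le_add_left (tsub_le_tsub_left h1 _) _
          _ = σ E := tsub_add_cancel_of_le (measure_mono (Set.singleton_subset_iff.mpr hpE))
          _ ≤ σ F := measure_mono hEF
      · calc (σ E - ⨆ q ∈ E ∩ P, σ {q}) + σ {p} ≤ σ E + σ {p} :=
              add_le_add_left tsub_le_self _
          _ = σ (E ∪ {p}) := (measure_union (Set.disjoint_singleton_right.mpr hpE)
              (measurableSet_singleton p)).symm
          _ ≤ σ F := measure_mono (Set.union_subset hEF (Set.singleton_subset_iff.mpr hp.1))
    have hsupne : (⨆ p ∈ F ∩ P, σ {p}) ≠ ⊤ := by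
      refine ne_top_of_le_ne_top hF ?_
      exact iSup₂_le fun p hp => measure_mono (Set.singleton_subset_iff.mpr hp.1)
    apply ENNReal.le_sub_of_add_le_right hsupne
    have hne : Nonempty (↥(F ∩ P)) := h.to_subtype
    rw [show (⨆ p ∈ F ∩ P, σ {p}) = ⨆ p : ↥(F ∩ P), σ {(p : EuclideanSpace ℝ (Fin n))} from
      (iSup_subtype'' _ _).symm ]
    rw [ENNReal.add_iSup]
    exact iSup_le fun ⟨p, hp⟩ => key p hp

lemma key_transfer {n : ℕ} (α : ℝ) (K : NNReal)
    (Ψ Ψinv : EuclideanSpace ℝ (Fin n) → EuclideanSpace ℝ (Fin n))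
    (hΨ : LipschitzWith K Ψ) (hinv : LipschitzWith K Ψinv)
    (hli : Function.LeftInverse Ψinv Ψ) (hri : Function.RightInverse Ψinv Ψ)
    (σ ω : Measure (EuclideanSpace ℝ (Fin n)))
    (hσ : ∀ (x : EuclideanSpace ℝ (Fin n)) (r : ℝ), σ (Metric.closedBall x r) ≠ ⊤)
    (A : ℝ≥0∞) (hA : A2punctLE α σ ω A) :
    A2punctLE α (Measure.map Ψinv σ) (Measure.map Ψinv ω)
      (ENNReal.ofReal ((2 * (K : ℝ) * Real.sqrt n + 1) ^ (2 * ((n : ℝ) - α))) * A) := by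
  intro f a s hs
  have mΨinv : Measurable Ψinv := hinv.continuous.measurable
  set Q := rotatedCube f a s with hQdef
  have hQmeas : MeasurableSet Q := measurableSet_rotatedCube f a s
  set E := Ψinv ⁻¹' Q with hEdef
  -- measure of the cube under the pushforwards
  have hmapσQ : Measure.map Ψinv σ Q = σ E := Measure.map_apply mΨinv hQmeas
  have hmapωQ : Measure.map Ψinv ω Q = ω E := Measure.map_apply mΨinv hQmeas
  -- singletons under the pushforward
  have hsing : ∀ (μ : Measure (EuclideanSpace ℝ (Fin n))) (p : EuclideanSpace ℝ (Fin n)),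
      Measure.map Ψinv μ {p} = μ {Ψ p} := by
    intro μ p
    rw [Measure.map_apply mΨinv (measurableSet_singleton p)]
    congr 1
    ext x
    simp only [Set.mem_preimage, Set.mem_singleton_iff]
    constructor
    · intro h; rw [← h]; exact (hri x).symm
    · intro h; rw [h]; exact hli p
  -- the common-atom sets correspond
  have hP : ∀ p, p ∈ commonAtoms (Measure.map Ψinv σ) (Measure.map Ψinv ω) ↔
      Ψ p ∈ commonAtoms σ ω := by
    intro p
    simp only [commonAtoms, Set.mem_setOf_eq, hsing]
  -- the sup of common atoms corresponds
  have hsup : (⨆ p ∈ Q ∩ commonAtoms (Measure.map Ψinv σ) (Measure.map Ψinv ω),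
      Measure.map Ψinv σ {p}) = ⨆ q ∈ E ∩ commonAtoms σ ω, σ {q} := by
    apply le_antisymm
    · refine iSup₂_le fun p hp => ?_
      rw [hsing]
      refine le_iSup₂_of_le (Ψ p) ⟨?_, (hP p).mp hp.2⟩ le_rfl
      show Ψinv (Ψ p) ∈ Q
      rw [hli p]; exact hp.1
    · refine iSup₂_le fun q hq => ?_
      have hq1 : Ψinv q ∈ Q := hq.1
      have hΨq : Ψ (Ψinv q) = q := hri q
      refine le_iSup₂_of_le (Ψinv q) ⟨hq1, ?_⟩ ?_
      · rw [hP, hΨq]; exact hq.2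
      · rw [hsing, hΨq]
  have hpunct : puncturedMass (Measure.map Ψinv σ)
      (commonAtoms (Measure.map Ψinv σ) (Measure.map Ψinv ω)) Q
      = puncturedMass σ (commonAtoms σ ω) E := by
    unfold puncturedMass
    rw [hmapσQ, hsup]
  -- geometry: find a big cube containing E
  have h0mem : (0 : EuclideanSpace ℝ (Fin n)) ∈ unitCornerCube n s := by
    intro i; exact ⟨le_refl 0, hs⟩
  set z : EuclideanSpace ℝ (Fin n) := a + f 0 with hz
  have hzQ : z ∈ Q := ⟨0, h0mem, rfl⟩
  set x₀ := Ψ z with hx0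
  have hx0E : x₀ ∈ E := by
    show Ψinv (Ψ z) ∈ Q
    rw [hli z]; exact hzQ
  set d : ℝ := (K : ℝ) * (Real.sqrt n * s) with hd
  have hd0 : 0 ≤ d := by positivity
  have hdistE : ∀ x ∈ E, dist x x₀ ≤ d := by
    intro x hx
    have h1 : dist x x₀ = dist (Ψ (Ψinv x)) (Ψ z) := by rw [hri x]
    rw [h1]
    calc dist (Ψ (Ψinv x)) (Ψ z) ≤ (K : ℝ) * dist (Ψinv x) z := hΨ.dist_le_mul _ _
      _ ≤ (K : ℝ) * (Real.sqrt n * s) :=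
          mul_le_mul_of_nonneg_left (dist_le_of_mem_rotatedCube hs.le hx hzQ) K.2
  set t : ℝ := 2 * d + s with ht
  have ht0 : 0 < t := by positivity
  set b : EuclideanSpace ℝ (Fin n) := WithLp.toLp 2 (fun i => x₀ i - t / 2) with hb
  set F := rotatedCube (LinearIsometryEquiv.refl ℝ (EuclideanSpace ℝ (Fin n))) b t with hF
  have hEF : E ⊆ F := by
    intro x hx
    refine ⟨x - b, ?_, by simp⟩
    intro i
    have habs : |x i - x₀ i| ≤ d := le_trans (abs_coord_le_dist x x₀ i) (hdistE x hx)
    rw [abs_le] at habs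
    have hxb : (x - b) i = x i - x₀ i + t / 2 := by
      simp [hb, PiLp.sub_apply]
      ring
    rw [hxb]
    constructor
    · have := habs.1; simp only [ht]; nlinarith
    · have := habs.2; simp only [ht]; nlinarith
  have hFball : F ⊆ Metric.closedBall x₀ (Real.sqrt n * t) := by
    have hx0F : x₀ ∈ F := by
      refine ⟨WithLp.toLp 2 (fun _ => t / 2), fun i => ⟨by simp; positivity, by simp; linarith⟩, ?_⟩
      simp only [LinearIsometryEquiv.coe_refl, id_eq]
      ext i
      show b i + t / 2 = x₀ i
      simp [hb]
    intro x hx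
    exact dist_le_of_mem_rotatedCube ht0.le hx hx0F
  have hσF : σ F ≠ ⊤ := ne_top_of_le_ne_top (hσ x₀ (Real.sqrt n * t)) (measure_mono hFball)
  -- combine
  have hmain : puncturedMass (Measure.map Ψinv σ)
      (commonAtoms (Measure.map Ψinv σ) (Measure.map Ψinv ω)) Q * Measure.map Ψinv ω Q
      ≤ puncturedMass σ (commonAtoms σ ω) F * ω F := by
    rw [hpunct, hmapωQ]
    exact mul_le_mul' (puncturedMass_mono σ _ E F hEF hσF) (measure_mono hEF)
  refine le_trans hmain (le_trans (hA (LinearIsometryEquiv.refl ℝ _) b t ht0) ?_)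
  show A * ENNReal.ofReal (t ^ (2 * ((n : ℝ) - α))) ≤ ENNReal.ofReal ((2 * (K : ℝ) * Real.sqrt n + 1) ^ (2 * ((n : ℝ) - α))) * A
        * ENNReal.ofReal (s ^ (2 * ((n : ℝ) - α)))
  have htcs : t = (2 * (K : ℝ) * Real.sqrt n + 1) * s := by rw [ht, hd]; ring
  have hc0 : (0 : ℝ) ≤ 2 * (K : ℝ) * Real.sqrt n + 1 := by positivity
  rw [htcs, Real.mul_rpow hc0 hs.le, ENNReal.ofReal_mul (by positivity)]
  exact le_of_eq (by ring)

/-- The punctured Muckenhoupt condition is invariant, up to constants depending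
only on `n`, `α` and the biLipschitz constant, under a globally biLipschitz
change of variables `Ψ` (with `Ψ*σ = (Ψ⁻¹)_*σ`). -/
theorem punctured_A2_bilipschitz_invariance {n : ℕ} (hn : 0 < n)
    (α : ℝ) (hα0 : 0 ≤ α) (hαn : α < n) (K : NNReal) :
    ∃ C : ℝ≥0∞, C ≠ ⊤ ∧
      ∀ (Ψ Ψinv : EuclideanSpace ℝ (Fin n) → EuclideanSpace ℝ (Fin n)),
        LipschitzWith K Ψ → LipschitzWith K Ψinv →
        Function.LeftInverse Ψinv Ψ → Function.RightInverse Ψinv Ψ →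
        ∀ (σ ω : Measure (EuclideanSpace ℝ (Fin n))),
          IsLocallyFiniteMeasure σ → IsLocallyFiniteMeasure ω →
          ∀ A : ℝ≥0∞,
            (A2punctLE α σ ω A →
              A2punctLE α (Measure.map Ψinv σ) (Measure.map Ψinv ω) (C * A)) ∧
            (A2punctLE α (Measure.map Ψinv σ) (Measure.map Ψinv ω) A →
              A2punctLE α σ ω (C * A)) := by
  refine ⟨ENNReal.ofReal ((2 * (K : ℝ) * Real.sqrt n + 1) ^ (2 * ((n : ℝ) - α))),
    ENNReal.ofReal_ne_top, ?_⟩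
  intro Ψ Ψinv hΨ hinv hli hri σ ω hσfin hωfin A
  constructor
  · intro hA
    exact key_transfer α K Ψ Ψinv hΨ hinv hli hri σ ω
      (fun x r => ((isCompact_closedBall x r).measure_lt_top).ne) A hA
  · intro hA
    have mΨ : Measurable Ψ := hΨ.continuous.measurable
    have mΨinv : Measurable Ψinv := hinv.continuous.measurable
    have hσ' : ∀ (x : EuclideanSpace ℝ (Fin n)) (r : ℝ),
        (Measure.map Ψinv σ) (Metric.closedBall x r) ≠ ⊤ := by
      intro x r
      rw [Measure.map_apply mΨinv Metric.isClosed_closedBall.measurableSet]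
      refine ne_top_of_le_ne_top
        ((isCompact_closedBall (Ψ x) ((K : ℝ) * r)).measure_lt_top).ne (measure_mono ?_)
      intro y hy
      simp only [Set.mem_preimage, Metric.mem_closedBall] at hy ⊢
      calc dist y (Ψ x) = dist (Ψ (Ψinv y)) (Ψ x) := by rw [hri y]
        _ ≤ (K : ℝ) * dist (Ψinv y) x := hΨ.dist_le_mul _ _
        _ ≤ (K : ℝ) * r := mul_le_mul_of_nonneg_left hy K.2
    have h2 := key_transfer α K Ψinv Ψ hinv hΨ hri hli
      (Measure.map Ψinv σ) (Measure.map Ψinv ω) hσ' A hA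
    rwa [Measure.map_map mΨ mΨinv, Measure.map_map mΨ mΨinv,
      (show Ψ ∘ Ψinv = id from funext hri), Measure.map_id, Measure.map_id] at h2
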